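/- Let (G, +) be a finite abelian group with a commutative associative ring multiplication · such that every element has a ∘-inverse, where x ∘ y = x + y + x·y, and let T = {τ_g : g ∈ G} ≤ Perm(G) with τ_g(x) = g ∘ x. Then for each prime p dividing |G|, the Sylow p-subgroup of T is exactly {τ_g : g ∈ G_p}, where G_p is the Sylow p-subgroup of (G, +). -/

import Mathlib

section CircleAux
variable {G : Type*} [NonUnitalCommRing G]

private lemma circ_aux (a b x : G) :
    a + (b + x + b * x) + a * (b + x + b * x) =
      (a + b + a * b) + x + (a + b + a * b) * x := by
  apply Unitization.inr_injective (R := ℤ)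
  simp only [Unitization.inr_add, Unitization.inr_mul]
  ring

variable (hinv : ∀ x : G, ∃ y : G, x + y + x * y = 0)

/-- The translation permutation `x ↦ g ∘ x` of the circle operation. -/
noncomputable def tauP (g : G) : Equiv.Perm G where
  toFun x := g + x + g * x
  invFun x := (hinv g).choose + x + (hinv g).choose * x
  left_inv x := by
    have h := (hinv g).choose_spec
    show (hinv g).choose + (g + x + g * x) + (hinv g).choose * (g + x + g * x) = x
    rw [circ_aux, add_comm (hinv g).choose g, mul_comm (hinv g).choose g, h,
      zero_add, zero_mul, add_zero]
  right_inv x := by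
    have h := (hinv g).choose_spec
    show g + ((hinv g).choose + x + (hinv g).choose * x) +
      g * ((hinv g).choose + x + (hinv g).choose * x) = x
    rw [circ_aux, h, zero_add, zero_mul, add_zero]

lemma tauP_apply (g x : G) : tauP hinv g x = g + x + g * x := rfl

lemma tauP_mul (a b : G) :
    tauP hinv a * tauP hinv b = tauP hinv (a + b + a * b) :=
  Equiv.ext fun x => circ_aux a b x

lemma tauP_zero : tauP hinv 0 = 1 :=
  Equiv.ext fun x => by simp [tauP_apply]

lemma tauP_eq_one_iff (g : G) : tauP hinv g = 1 ↔ g = 0 := by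
  constructor
  · intro h
    have := congrArg (fun e : Equiv.Perm G => e 0) h
    simpa [tauP_apply] using this
  · rintro rfl; exact tauP_zero hinv

lemma tauP_injective : Function.Injective (tauP hinv) := by
  intro a b h
  have := congrArg (fun e : Equiv.Perm G => e 0) h
  simpa [tauP_apply] using this

lemma tauP_comm (a b : G) :
    tauP hinv a * tauP hinv b = tauP hinv b * tauP hinv a := by
  rw [tauP_mul, tauP_mul, add_comm a b, mul_comm a b]

end CircleAux

section NpwAux
variable {G : Type*} [NonUnitalCommRing G]

/-- `npwP g n = g ^ (n+1)` in a non-unital ring. -/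
def npwP (g : G) : ℕ → G
  | 0 => g
  | n + 1 => g * npwP g n

lemma npwP_mul (g : G) (i j : ℕ) : npwP g i * npwP g j = npwP g (i + j + 1) := by
  induction i with
  | zero => simp only [Nat.zero_add]; rfl
  | succ i ih =>
    have : i + 1 + j + 1 = (i + j + 1) + 1 := by omega
    rw [this]
    show g * npwP g i * npwP g j = g * npwP g (i + j + 1)
    rw [mul_assoc, ih]

/-- The additive subgroup generated by the powers of `g`. -/
def powClosure (g : G) : AddSubgroup G := AddSubgroup.closure (Set.range (npwP g))

lemma self_mem_powClosure (g : G) : g ∈ powClosure g :=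
  AddSubgroup.subset_closure ⟨0, rfl⟩

lemma mul_mem_powClosure {g x y : G} (hx : x ∈ powClosure g) (hy : y ∈ powClosure g) :
    x * y ∈ powClosure g := by
  induction hx using AddSubgroup.closure_induction with
  | mem a ha =>
    obtain ⟨i, rfl⟩ := ha
    induction hy using AddSubgroup.closure_induction with
    | mem b hb =>
      obtain ⟨j, rfl⟩ := hb
      exact AddSubgroup.subset_closure ⟨i + j + 1, (npwP_mul g i j).symm ▸ rfl⟩
    | zero => simpa using (powClosure g).zero_mem
    | add a b _ _ ha hb => rw [mul_add]; exact (powClosure g).add_mem ha hb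
    | neg a _ ha => rw [mul_neg]; exact (powClosure g).neg_mem ha
  | zero => simpa using (powClosure g).zero_mem
  | add a b _ _ ha hb => rw [add_mul]; exact (powClosure g).add_mem ha hb
  | neg a _ ha => rw [neg_mul]; exact (powClosure g).neg_mem ha

lemma nsmul_npwP_eq_zero {g : G} {n : ℕ} (hn : n • g = 0) (i : ℕ) : n • npwP g i = 0 := by
  induction i with
  | zero => exact hn
  | succ i ih =>
    show n • (g * npwP g i) = 0
    calc n • (g * npwP g i) = g * (n • npwP g i) := ((AddMonoidHom.mulLeft g).map_nsmul _ _).symm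
    _ = 0 := by rw [ih, mul_zero]

lemma nsmul_powClosure_eq_zero {g x : G} {n : ℕ} (hn : n • g = 0) (hx : x ∈ powClosure g) :
    n • x = 0 := by
  induction hx using AddSubgroup.closure_induction with
  | mem a ha => obtain ⟨i, rfl⟩ := ha; exact nsmul_npwP_eq_zero hn i
  | zero => simp
  | add a b _ _ ha hb => rw [smul_add, ha, hb, add_zero]
  | neg a _ ha => rw [smul_neg, ha, neg_zero]

end NpwAux

section KeyAux
variable {G : Type*} [NonUnitalCommRing G] [Finite G]
variable (hinv : ∀ x : G, ∃ y : G, x + y + x * y = 0)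

include hinv in
lemma exists_circ_inv_mem {g x : G} (hx : x ∈ powClosure g) :
    ∃ y ∈ powClosure g, x + y + x * y = 0 := by
  classical
  let f : powClosure g → powClosure g := fun y =>
    ⟨x + y + x * y, (powClosure g).add_mem ((powClosure g).add_mem hx y.2)
      (mul_mem_powClosure hx y.2)⟩
  have hf : Function.Injective f := by
    intro y₁ y₂ h
    have h' : tauP hinv x (y₁ : G) = tauP hinv x (y₂ : G) := congrArg Subtype.val h
    exact Subtype.ext ((tauP hinv x).injective h')
  obtain ⟨y, hy⟩ := (Finite.injective_iff_surjective.mp hf) ⟨0, (powClosure g).zero_mem⟩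
  exact ⟨y, y.2, congrArg Subtype.val hy⟩

/-- The image of `powClosure g` under `tauP` is a subgroup of `Perm G`. -/
noncomputable def tauGroup (g : G) : Subgroup (Equiv.Perm G) where
  carrier := tauP hinv '' (powClosure g)
  one_mem' := ⟨0, (powClosure g).zero_mem, tauP_zero hinv⟩
  mul_mem' := by
    rintro _ _ ⟨a, ha, rfl⟩ ⟨b, hb, rfl⟩
    exact ⟨a + b + a * b,
      (powClosure g).add_mem ((powClosure g).add_mem ha hb) (mul_mem_powClosure ha hb),
      (tauP_mul hinv a b).symm⟩
  inv_mem' := by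
    rintro _ ⟨a, ha, rfl⟩
    obtain ⟨y, hy, hy0⟩ := exists_circ_inv_mem hinv ha
    refine ⟨y, hy, ?_⟩
    have : tauP hinv a * tauP hinv y = 1 := by
      rw [tauP_mul, hy0, tauP_zero]
    exact (eq_inv_of_mul_eq_one_left ((tauP_comm hinv a y) ▸ this))

lemma key_prime_dvd {g : G} {n : ℕ} (hn : n • g = 0) {q : ℕ} (hq : q.Prime)
    (hdvd : q ∣ orderOf (tauP hinv g)) : q ∣ n := by
  classical
  have hmem : tauP hinv g ∈ tauGroup hinv g := ⟨g, self_mem_powClosure g, rfl⟩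
  have h1 : orderOf (tauP hinv g) ∣ Nat.card (tauGroup hinv g) := by
    rw [← Subgroup.orderOf_mk (H := tauGroup hinv g) _ hmem]
    exact orderOf_dvd_natCard _
  have hcard : Nat.card (tauGroup hinv g) = Nat.card (powClosure g) := by
    show Nat.card (tauP hinv '' (powClosure g : Set G)) = _
    rw [Nat.card_image_of_injective (tauP_injective hinv)]
    rfl
  haveI := Fact.mk hq
  haveI : Fintype (powClosure g) := Fintype.ofFinite _
  have hq2 : q ∣ Fintype.card (powClosure g) := by
    rw [← Nat.card_eq_fintype_card, ← hcard]
    exact hdvd.trans h1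
  obtain ⟨x, hx⟩ := exists_prime_addOrderOf_dvd_card q hq2
  have hnx : n • x = 0 := by
    ext
    simpa using nsmul_powClosure_eq_zero hn x.2
  have := addOrderOf_dvd_of_nsmul_eq_zero hnx
  rwa [hx] at this

end KeyAux

section ZsmulAux
variable {G : Type*} [NonUnitalCommRing G]

lemma zsmulP_mul (k : ℤ) (a b : G) : (k • a) * b = k • (a * b) :=
  (AddMonoidHom.mulRight b).map_zsmul k a

lemma mul_zsmulP (k : ℤ) (a b : G) : a * (k • b) = k • (a * b) :=
  (AddMonoidHom.mulLeft a).map_zsmul k b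

end ZsmulAux

/-- Let `(G,+,·)` be a finite commutative associative non-unital ring whose circle
operation `x ∘ y = x + y + x·y` admits inverses, and let `T ≤ Perm G` be the subgroup of
all translations `τ_g : x ↦ g ∘ x`.  Then for each prime `p` dividing `|G|`, the Sylow
`p`-subgroup of `T` consists exactly of the `τ_g` with `g` in the Sylow `p`-subgroup
(`p`-primary component) of `(G,+)`. -/
theorem sylow_of_tau_subgroup {G : Type*} [NonUnitalCommRing G] [Finite G]
    (hinv : ∀ x : G, ∃ y : G, x + y + x * y = 0)
    (T : Subgroup (Equiv.Perm G))
    (hT : ∀ t : Equiv.Perm G, t ∈ T ↔ ∃ g : G, ∀ x : G, t x = g + x + g * x)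
    (p : ℕ) [Fact p.Prime] (hp : p ∣ Nat.card G) (S : Sylow p ↥T) :
    ∀ t : ↥T, t ∈ (S : Subgroup ↥T) ↔
      ∃ g ∈ AddCommGroup.primaryComponent G p,
        ∀ x : G, (t : Equiv.Perm G) x = g + x + g * x := by
  classical
  -- T is commutative
  have hcomm : ∀ a b : ↥T, a * b = b * a := by
    intro a b
    obtain ⟨x, hx⟩ := (hT a).mp a.2
    obtain ⟨y, hy⟩ := (hT b).mp b.2
    have hxa : (a : Equiv.Perm G) = tauP hinv x := Equiv.ext fun z => hx z
    have hyb : (b : Equiv.Perm G) = tauP hinv y := Equiv.ext fun z => hy z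
    apply Subtype.ext
    show (a : Equiv.Perm G) * (b : Equiv.Perm G) = (b : Equiv.Perm G) * (a : Equiv.Perm G)
    rw [hxa, hyb, tauP_comm]
  have hnormal : (S : Subgroup ↥T).Normal := by
    constructor
    intro m hm gg
    rw [hcomm gg m, mul_assoc, mul_inv_cancel, mul_one]
    exact hm
  haveI : Finite (Sylow p ↥T) :=
    Finite.of_injective (fun P : Sylow p ↥T => (P : Set ↥T)) SetLike.coe_injective
  haveI := Sylow.unique_of_normal S hnormal
  intro t
  obtain ⟨g, hg⟩ := (hT t).mp t.2
  have htau : (t : Equiv.Perm G) = tauP hinv g := Equiv.ext fun z => hg z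
  constructor
  · -- forward
    intro htS
    refine ⟨g, ?_, hg⟩
    -- t is killed by a power of p
    obtain ⟨k, hk⟩ := S.2 ⟨t, htS⟩
    have hk1 : (t : Equiv.Perm G) ^ (p ^ k) = 1 := by
      have h1 : ((⟨t, htS⟩ : (S : Subgroup ↥T)) : ↥T) ^ (p ^ k) = 1 := by
        rw [← SubmonoidClass.coe_pow, hk]; rfl
      have h2 : (t : Equiv.Perm G) ^ (p ^ k) =
          ((((⟨t, htS⟩ : (S : Subgroup ↥T)) : ↥T) ^ (p ^ k) : ↥T) : Equiv.Perm G) := by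
        rw [← SubmonoidClass.coe_pow]
      rw [h2, h1]; rfl
    have hordg : orderOf (tauP hinv g) ∣ p ^ k :=
      orderOf_dvd_of_pow_eq_one (htau ▸ hk1)
    -- decomposition of g into p-part and p'-part
    set n := addOrderOf g with hn
    have hn0 : n ≠ 0 := (addOrderOf_pos g).ne'
    set a := n.factorization p with ha
    set m := n / p ^ a with hm
    have hfac : p ^ a * m = n := Nat.ordProj_mul_ordCompl_eq_self n p
    have hcop : Nat.Coprime p m := Nat.coprime_ordCompl Fact.out hn0
    have hcop2 : Nat.Coprime m (p ^ a) := (hcop.symm).pow_right a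
    obtain ⟨c, d, hbez⟩ : ∃ c d : ℤ, (m : ℤ) * c + ((p ^ a : ℕ) : ℤ) * d = 1 := by
      have h1 := Int.gcd_eq_gcd_ab (m : ℤ) ((p ^ a : ℕ) : ℤ)
      have h2 : Int.gcd (m : ℤ) ((p ^ a : ℕ) : ℤ) = 1 := by
        rw [Int.gcd_natCast_natCast]
        exact hcop2
      exact ⟨_, _, by rw [← h1, h2, Nat.cast_one]⟩
    set u := ((m : ℤ) * c) • g with hu_def
    set v := (((p ^ a : ℕ) : ℤ) * d) • g with hv_def
    have hsum : u + v = g := by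
      rw [hu_def, hv_def, ← add_smul, hbez, one_smul]
    have hng : (n : ℤ) • g = 0 := by
      rw [natCast_zsmul]
      exact addOrderOf_nsmul_eq_zero g
    have hu : (p ^ a) • u = 0 := by
      rw [← natCast_zsmul, hu_def, smul_smul]
      have : ((p ^ a : ℕ) : ℤ) * ((m : ℤ) * c) = c * (n : ℤ) := by
        push_cast [← hfac]; ring
      rw [this, mul_smul, hng, smul_zero]
    have hv : m • v = 0 := by
      rw [← natCast_zsmul, hv_def, smul_smul]
      have : ((m : ℕ) : ℤ) * (((p ^ a : ℕ) : ℤ) * d) = d * (n : ℤ) := by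
        push_cast [← hfac]; ring
      rw [this, mul_smul, hng, smul_zero]
    have hngg : (n : ℤ) • (g * g) = 0 := by
      rw [← zsmulP_mul, hng, zero_mul]
    have huv : u * v = 0 := by
      have h1 : u * v = (((m : ℤ) * c) * (((p ^ a : ℕ) : ℤ) * d)) • (g * g) := by
        rw [hu_def, hv_def, zsmulP_mul, mul_zsmulP, smul_smul]
      have h2 : ((m : ℤ) * c) * (((p ^ a : ℕ) : ℤ) * d) = (c * d) * (n : ℤ) := by
        push_cast [← hfac]; ring
      rw [h1, h2, mul_smul, hngg, smul_zero]
    have hcirc : u + v + u * v = g := by rw [huv, add_zero, hsum]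
    have htu : tauP hinv u * tauP hinv v = tauP hinv g := by rw [tauP_mul, hcirc]
    -- order of tauP v divides N := orderOf (tauP u) * p ^ k
    set N := orderOf (tauP hinv u) * p ^ k with hN_def
    have hN : tauP hinv v ^ N = 1 := by
      have hcmm : Commute (tauP hinv u) (tauP hinv v) := tauP_comm hinv u v
      have h1 := hcmm.mul_pow N
      rw [htu] at h1
      have h2 : tauP hinv g ^ N = 1 :=
        orderOf_dvd_iff_pow_eq_one.mp (hordg.trans (dvd_mul_left _ _))
      have h3 : tauP hinv u ^ N = 1 :=
        orderOf_dvd_iff_pow_eq_one.mp (dvd_mul_right _ _)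
      rw [h2, h3, one_mul] at h1
      exact h1.symm
    have hdvN : orderOf (tauP hinv v) ∣ N := orderOf_dvd_of_pow_eq_one hN
    -- tauP v = 1
    have hv1 : tauP hinv v = 1 := by
      by_contra hne
      have hord_ne : orderOf (tauP hinv v) ≠ 1 := fun h => hne (orderOf_eq_one_iff.mp h)
      obtain ⟨q, hq, hqd⟩ := Nat.exists_prime_and_dvd hord_ne
      have hqm : q ∣ m := key_prime_dvd hinv hv hq hqd
      have hqN : q ∣ N := hqd.trans hdvN
      have hqp : q = p := by
        rcases (Nat.Prime.dvd_mul hq).mp hqN with h | h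
        · have := key_prime_dvd hinv hu hq h
          exact (Nat.prime_dvd_prime_iff_eq hq Fact.out).mp (hq.dvd_of_dvd_pow this)
        · exact (Nat.prime_dvd_prime_iff_eq hq Fact.out).mp (hq.dvd_of_dvd_pow h)
      subst hqp
      have := hcop.eq_one_of_dvd hqm
      exact hq.one_lt.ne' this
    have hv0 : v = 0 := (tauP_eq_one_iff hinv v).mp hv1
    have hgu : g = u := by rw [← hsum, hv0, add_zero]
    have hsg : (p ^ a) • g = 0 := by rw [hgu]; exact hu
    have hdvd : addOrderOf g ∣ p ^ a := addOrderOf_dvd_of_nsmul_eq_zero hsg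
    obtain ⟨b, _, hb⟩ := (Nat.dvd_prime_pow Fact.out).mp hdvd
    exact ⟨b, by rw [← hb]; exact addOrderOf_nsmul_eq_zero g⟩
  · -- backward
    rintro ⟨g', hg'mem, hg'⟩
    have htau' : (t : Equiv.Perm G) = tauP hinv g' := Equiv.ext fun z => hg' z
    obtain ⟨b, hb⟩ := hg'mem
    have hsmul : (p ^ b) • g' = 0 := hb
    have hpos : orderOf ((t : Equiv.Perm G)) ≠ 0 := (orderOf_pos _).ne'
    have hj : ∀ {q : ℕ}, q.Prime → q ∣ orderOf (t : Equiv.Perm G) → q = p := by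
      intro q hq hd
      have := key_prime_dvd hinv hsmul hq (htau' ▸ hd)
      exact (Nat.prime_dvd_prime_iff_eq hq Fact.out).mp (hq.dvd_of_dvd_pow this)
    obtain ⟨j, hj2⟩ : ∃ j, orderOf ((t : Equiv.Perm G)) = p ^ j :=
      ⟨_, Nat.eq_prime_pow_of_unique_prime_dvd hpos hj⟩
    have hordt : orderOf t = p ^ j := by
      rw [← Subgroup.orderOf_coe t]; exact hj2
    have hP : IsPGroup p (Subgroup.zpowers t) :=
      IsPGroup.of_card (by rw [Nat.card_zpowers, hordt])
    obtain ⟨Q, hQ⟩ := hP.exists_le_sylow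
    have hQS : Q = S := Subsingleton.elim Q S
    rw [← hQS]
    exact hQ (Subgroup.mem_zpowers t)
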